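/- Let n be a positive integer, ε ∈ (0, 1/3), and σ ≥ √(ln(2n(1 + 1/ε))/π). Let γ be the probability measure on ℝⁿ with Lebesgue density ρ_σ(x) = σ^{−n} exp(−π‖x‖²/σ²), and let μ be the pushforward of γ under the coordinatewise fractional-part map mod₁ : ℝⁿ → [0,1)ⁿ. Then for every Borel set A ⊆ [0,1)ⁿ, |μ(A) − λ(A)| ≤ ε, where λ denotes Lebesgue measure; that is, the total variation distance between the collapsed Gaussian distribution and the uniform distribution on [0,1)ⁿ is at most ε. -/

import Mathlib

open MeasureTheory

section CGAAux
open Real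


private lemma cga_summable_shift {c : ℝ} (hc : 0 < c) (z : ℝ) :
    Summable fun k : ℤ => Real.exp (-c * (z + k) ^ 2) := by
  have hr0 : (0:ℝ) ≤ Real.exp (-(2*c)) := (Real.exp_pos _).le
  have hr1 : Real.exp (-(2*c)) < 1 := by
    rw [Real.exp_lt_one_iff]; linarith
  have hg : Summable fun k : ℕ => Real.exp (-(2*c)) ^ k :=
    summable_geometric_of_lt_one hr0 hr1
  apply Summable.of_nat_of_neg_add_one
  · refine Summable.of_nonneg_of_le (fun k => (Real.exp_pos _).le) (fun k => ?_)
      (hg.mul_left (Real.exp (c*(1-2*z))))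
    rw [← Real.exp_nat_mul, ← Real.exp_add]
    apply Real.exp_le_exp.2
    push_cast
    nlinarith [sq_nonneg (z + k - 1)]
  · refine Summable.of_nonneg_of_le (fun k => (Real.exp_pos _).le) (fun k => ?_)
      (hg.mul_left (Real.exp (c*(2*z-1))))
    rw [← Real.exp_nat_mul, ← Real.exp_add]
    apply Real.exp_le_exp.2
    push_cast
    nlinarith [sq_nonneg (z - k)]

private lemma cga_hasSum_D {t : ℝ} (h0 : 0 < t) (h1 : t < 1) :
    HasSum (fun m : ℤ => if m = 0 then (0:ℝ) else t ^ (2 * m.natAbs - 1))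
      (2 * (t / (1 - t ^ 2))) := by
  have ht2 : t ^ 2 < 1 := by nlinarith
  have hgeom : HasSum (fun k : ℕ => t * (t ^ 2) ^ k) (t / (1 - t ^ 2)) := by
    have := (hasSum_geometric_of_lt_one (by positivity) ht2).mul_left t
    simpa [div_eq_mul_inv] using this
  have key : ∀ k : ℕ, t ^ (2 * (k+1) - 1) = t * (t ^ 2) ^ k := by
    intro k
    have h : 2 * (k+1) - 1 = 2*k + 1 := by omega
    rw [h, ← pow_mul, ← pow_succ']
  have h2 : 2 * (t / (1 - t ^ 2)) = t / (1 - t^2) + t / (1 - t^2) := by ring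
  rw [h2]
  apply HasSum.of_nat_of_neg_add_one
  · rw [← hasSum_nat_add_iff' 1]
    simp only [Finset.range_one, Finset.sum_singleton, Nat.cast_zero]
    norm_num
    have heq : (fun k : ℕ => if ((k:ℕ)+1 : ℤ) = 0 then (0:ℝ)
        else t ^ (2 * (((k:ℕ)+1 : ℤ)).natAbs - 1)) = fun k : ℕ => t * (t ^ 2) ^ k := by
      funext k
      have hne : ((k:ℕ)+1 : ℤ) ≠ 0 := by omega
      rw [if_neg hne, show (((k:ℕ)+1 : ℤ)).natAbs = k + 1 by omega, key]
    rw [heq]; exact hgeom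
  · convert hgeom using 2 with k
    have hne : (-((k:ℕ)+1) : ℤ) ≠ 0 := by omega
    push_cast
    rw [if_neg hne, show ((-((k:ℕ)+1) : ℤ)).natAbs = k + 1 by omega, key]

private lemma cga_pow_bound {t : ℝ} (h0 : 0 < t) (h1 : t < 1) {m : ℤ} (hm : m ≠ 0) :
    t ^ (m.natAbs ^ 2) ≤ t ^ (2 * m.natAbs - 1) := by
  apply pow_le_pow_of_le_one h0.le h1.le
  have hk : 1 ≤ m.natAbs := Int.natAbs_pos.2 hm
  have h2 : 2 * m.natAbs ≤ m.natAbs ^ 2 + 1 := by nlinarith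
  omega

set_option maxHeartbeats 1000000 in
private lemma cga_poisson {σ : ℝ} (hσ : 0 < σ) (z : ℝ) :
    |σ⁻¹ * (∑' k : ℤ, Real.exp (-Real.pi * (z + k) ^ 2 / σ ^ 2)) - 1|
      ≤ 2 * (Real.exp (-Real.pi * σ ^ 2) / (1 - Real.exp (-Real.pi * σ ^ 2) ^ 2)) := by
  have hπ := Real.pi_pos
  set t : ℝ := Real.exp (-Real.pi * σ ^ 2) with ht_def
  have ht0 : 0 < t := Real.exp_pos _
  have hσ2 : (0:ℝ) < σ ^ 2 := by positivity
  have ht1 : t < 1 := by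
    rw [ht_def, Real.exp_lt_one_iff]; nlinarith
  have hσc : (σ:ℂ) ≠ 0 := Complex.ofReal_ne_zero.2 hσ.ne'
  set r : ℝ := (σ ^ 2)⁻¹ with hr_def
  have hr0 : 0 < r := by positivity
  have hrc : ((r:ℂ)) = ((σ:ℂ) ^ 2)⁻¹ := by
    rw [hr_def]; push_cast; ring
  set c : ℤ → ℂ := fun m =>
    Complex.exp (((-Real.pi * σ ^ 2 * (m:ℝ) ^ 2 : ℝ) : ℂ)) *
      Complex.exp (((2 * Real.pi * z * (m:ℝ) : ℝ) : ℂ) * Complex.I) with hc_def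
  have hnormc : ∀ m : ℤ, ‖c m‖ = t ^ (m.natAbs ^ 2) := by
    intro m
    rw [hc_def]
    simp only [norm_mul, Complex.norm_exp, Complex.ofReal_re,
      Complex.mul_re, Complex.ofReal_im, Complex.I_re, Complex.I_im, mul_zero, mul_one,
      zero_mul, sub_zero, zero_sub, neg_zero, Real.exp_zero]
    have hm2 : (-Real.pi * σ ^ 2 * (m:ℝ) ^ 2) = ((m.natAbs ^ 2 : ℕ) : ℝ) * (-Real.pi * σ ^ 2) := by
      have h3 : ((m.natAbs : ℝ)) ^ 2 = ((m:ℝ)) ^ 2 := by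
        rw [Nat.cast_natAbs, Int.cast_abs, sq_abs]
      push_cast
      rw [h3]; ring
    rw [hm2, Real.exp_nat_mul, ht_def]
  have key := Complex.tsum_exp_neg_quadratic (a := (r:ℂ))
    (by simpa using hr0) (((-z * r : ℝ)) : ℂ)
  have main : ((σ⁻¹ * (∑' k : ℤ, Real.exp (-Real.pi * (z + k) ^ 2 / σ ^ 2)) : ℝ) : ℂ)
      = ∑' m : ℤ, c m := by
    have step1 : ∀ k : ℤ, ((( -Real.pi * (z + k) ^ 2 / σ ^ 2 : ℝ)) : ℂ)
        = (-(Real.pi:ℂ) * r * (k:ℂ) ^ 2 + 2 * (Real.pi:ℂ) * ((-z * r : ℝ) : ℂ) * (k:ℂ))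
          + (-(Real.pi:ℂ) * r * (z:ℂ) ^ 2) := by
      intro k
      have h2 : ((σ:ℂ)^2) ≠ 0 := pow_ne_zero _ hσc
      push_cast
      rw [hrc]
      field_simp
      ring
    have step4 : ∀ m : ℤ,
        Complex.exp (-(Real.pi:ℂ) / (r:ℂ) * ((m:ℂ) + Complex.I * ((-z * r : ℝ) : ℂ)) ^ 2) *
          Complex.exp (-(Real.pi:ℂ) * r * (z:ℂ) ^ 2) = c m := by
      intro m
      simp only [hc_def]
      rw [← Complex.exp_add, ← Complex.exp_add]
      congr 1
      have h2 : ((σ:ℂ)^2) ≠ 0 := pow_ne_zero _ hσc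
      push_cast
      rw [hrc]
      field_simp
      ring_nf
      rw [Complex.I_sq]
      ring
    have sqrt_r : (1 : ℂ) / (r:ℂ) ^ (1/2 : ℂ) = (σ:ℂ) := by
      have h2 : r ^ (1/2 : ℝ) = σ⁻¹ := by
        rw [hr_def, ← Real.sqrt_eq_rpow, Real.sqrt_inv, Real.sqrt_sq hσ.le]
      have h1 : ((r ^ (1/2 : ℝ) : ℝ) : ℂ) = (r:ℂ) ^ ((1/2 : ℝ) : ℂ) :=
        Complex.ofReal_cpow hr0.le _
      have h3 : ((1/2 : ℝ) : ℂ) = (1/2 : ℂ) := by push_cast; ring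
      rw [← h3, ← h1, h2]
      push_cast
      rw [one_div, inv_inv]
    calc ((σ⁻¹ * (∑' k : ℤ, Real.exp (-Real.pi * (z + k) ^ 2 / σ ^ 2)) : ℝ) : ℂ)
        = (σ:ℂ)⁻¹ * ∑' k : ℤ, Complex.exp ((( -Real.pi * (z + k) ^ 2 / σ ^ 2 : ℝ)) : ℂ) := by
          push_cast [Complex.ofReal_tsum, Complex.ofReal_exp]
          rfl
      _ = (σ:ℂ)⁻¹ * ∑' k : ℤ, (Complex.exp (-(Real.pi:ℂ) * r * (k:ℂ) ^ 2
              + 2 * (Real.pi:ℂ) * ((-z * r : ℝ) : ℂ) * (k:ℂ)) *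
            Complex.exp (-(Real.pi:ℂ) * r * (z:ℂ) ^ 2)) := by
          congr 1
          refine tsum_congr fun k => ?_
          rw [← Complex.exp_add, step1 k]
      _ = (σ:ℂ)⁻¹ * ((∑' k : ℤ, Complex.exp (-(Real.pi:ℂ) * r * (k:ℂ) ^ 2
              + 2 * (Real.pi:ℂ) * ((-z * r : ℝ) : ℂ) * (k:ℂ))) *
            Complex.exp (-(Real.pi:ℂ) * r * (z:ℂ) ^ 2)) := by
          rw [tsum_mul_right]
      _ = (σ:ℂ)⁻¹ * (((1 : ℂ) / (r:ℂ) ^ (1/2 : ℂ) *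
            ∑' m : ℤ, Complex.exp (-(Real.pi:ℂ) / (r:ℂ) *
              ((m:ℂ) + Complex.I * ((-z * r : ℝ) : ℂ)) ^ 2)) *
            Complex.exp (-(Real.pi:ℂ) * r * (z:ℂ) ^ 2)) := by
          rw [key]
      _ = (σ:ℂ)⁻¹ * ((σ:ℂ) * ∑' m : ℤ, c m) := by
          rw [sqrt_r, mul_assoc, ← tsum_mul_right,
            tsum_congr (fun m => step4 m)]
      _ = ∑' m : ℤ, c m := by
          rw [← mul_assoc, inv_mul_cancel₀ hσc, one_mul]
  -- now the bound
  have hD := cga_hasSum_D ht0 ht1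
  have hD' : Summable (fun m : ℤ => if m = 0 then (0:ℝ) else t ^ (2 * m.natAbs - 1)) :=
    hD.summable
  have hsum_norm_c : Summable fun m : ℤ => ‖c m‖ := by
    have hb : Summable (fun m : ℤ =>
        (if m = 0 then (0:ℝ) else t ^ (2 * m.natAbs - 1)) + (if m = 0 then 1 else 0)) :=
      hD'.add (hasSum_ite_eq (0:ℤ) (1:ℝ)).summable
    refine Summable.of_nonneg_of_le (fun m => norm_nonneg _) (fun m => ?_) hb
    rw [hnormc m]
    by_cases hm : m = 0
    · simp [hm]
    · rw [if_neg hm, if_neg hm, add_zero]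
      exact cga_pow_bound ht0 ht1 hm
  have hsum_c : Summable c := hsum_norm_c.of_norm
  have hc0 : c 0 = 1 := by
    simp [hc_def]
  have split := hsum_c.tsum_eq_add_tsum_ite 0
  rw [hc0] at split
  have habs : |σ⁻¹ * (∑' k : ℤ, Real.exp (-Real.pi * (z + k) ^ 2 / σ ^ 2)) - 1|
      = ‖(∑' m : ℤ, c m) - 1‖ := by
    rw [← main]
    rw [← Complex.ofReal_one, ← Complex.ofReal_sub, Complex.norm_real, Real.norm_eq_abs]
  rw [habs, split]
  have h5 : (1 : ℂ) + (∑' m : ℤ, if m = 0 then 0 else c m) - 1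
      = ∑' m : ℤ, if m = 0 then 0 else c m := by ring
  rw [h5]
  have hsum_ite : Summable fun m : ℤ => ‖if m = 0 then (0:ℂ) else c m‖ := by
    refine Summable.of_nonneg_of_le (fun m => norm_nonneg _) (fun m => ?_) hsum_norm_c
    by_cases hm : m = 0 <;> simp [hm]
  refine (norm_tsum_le_tsum_norm hsum_ite).trans ?_
  have hle := Summable.tsum_le_tsum (f := fun m : ℤ => ‖if m = 0 then (0:ℂ) else c m‖)
    (g := fun m : ℤ => if m = 0 then (0:ℝ) else t ^ (2 * m.natAbs - 1))
    (fun m => ?_) hsum_ite hD'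
  · exact hle.trans_eq hD.tsum_eq
  · by_cases hm : m = 0
    · simp [hm]
    · simp only [if_neg hm]
      rw [hnormc m]
      exact cga_pow_bound ht0 ht1 hm


set_option maxHeartbeats 1000000 in
private lemma cga_numeric {n : ℕ} (hn : 1 ≤ n) {ε t : ℝ} (hε0 : 0 < ε) (hε3 : ε < 1/3)
    (ht0 : 0 < t) (ht : t ≤ ε / (2 * n * (1 + ε))) :
    0 ≤ 2 * (t / (1 - t^2)) ∧ 2 * (t / (1 - t^2)) < 1 ∧
    (1 + 2 * (t / (1 - t^2))) ^ n ≤ 1 + ε ∧ 1 - ε ≤ (1 - 2 * (t / (1 - t^2))) ^ n := by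
  have hn1 : (1:ℝ) ≤ (n:ℝ) := by exact_mod_cast hn
  set s : ℝ := ε / (1 + ε) with hs_def
  have hε1 : (0:ℝ) < 1 + ε := by linarith
  have hs0 : 0 < s := div_pos hε0 hε1
  have hs4 : s ≤ 1/4 := by
    rw [hs_def, div_le_iff₀ hε1]; linarith
  have hεs : ε * (1 - s) = s := by
    rw [hs_def]; field_simp; ring
  have hn0 : (n:ℝ) ≠ 0 := by positivity
  have hnt : (n:ℝ) * t ≤ s / 2 := by
    have h1 : ε / (2 * n * (1 + ε)) = s / (2 * n) := by
      rw [hs_def, div_div]; ring_nf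
    have h2 : (n:ℝ) * t ≤ (n:ℝ) * (s / (2 * n)) := by
      apply mul_le_mul_of_nonneg_left _ (by linarith)
      rw [← h1]; exact ht
    calc (n:ℝ) * t ≤ (n:ℝ) * (s / (2 * n)) := h2
      _ = s / 2 := by field_simp
  clear_value s
  have ht8 : t ≤ 1/8 := by nlinarith
  have hd : (0:ℝ) < 1 - t^2 := by nlinarith
  set a : ℝ := 2 * (t / (1 - t^2)) with ha_def
  have ha0 : 0 ≤ a := by positivity
  have had : a * (1 - t^2) = 2 * t := by
    rw [ha_def]; field_simp
  clear_value a
  have hts : t ≤ s / 2 := by nlinarith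
  have hds : 1 - s^2/4 ≤ 1 - t^2 := by nlinarith
  have hds0 : (0:ℝ) < 1 - s^2/4 := by nlinarith
  set u : ℝ := (n:ℝ) * a with hu_def
  have hu0 : 0 ≤ u := by
    rw [hu_def]; exact mul_nonneg (Nat.cast_nonneg n) ha0
  clear_value u
  have hu_d : u * (1 - s^2/4) ≤ s := by
    have h1 : u * (1 - s^2/4) ≤ u * (1 - t^2) := by
      apply mul_le_mul_of_nonneg_left hds hu0
    have h2 : u * (1 - t^2) = (n:ℝ) * (2 * t) := by
      rw [hu_def, mul_assoc, had]
    nlinarith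
  have ha1 : a < 1 := by
    have h2t : 2*t < 1 - t^2 := by nlinarith
    have h3 : a * (1-t^2) < 1 * (1-t^2) := by rw [had, one_mul]; exact h2t
    exact lt_of_mul_lt_mul_right h3 hd.le
  have hs1 : (0:ℝ) < 1 - s := by linarith
  have huε : u ≤ ε := by
    have l1 : u * (1-s) ≤ u * (1-s^2/4) :=
      mul_le_mul_of_nonneg_left (by nlinarith) hu0
    have l2 : u * (1-s) ≤ ε * (1-s) := by
      rw [hεs]; exact l1.trans hu_d
    exact le_of_mul_le_mul_right l2 hs1
  have hu1 : u ≤ 1 := by linarith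
  refine ⟨ha0, ha1, ?_, ?_⟩
  · -- upper bound
    have h1 : (1 + a) ^ n ≤ Real.exp a ^ n :=
      pow_le_pow_left₀ (by linarith) (by linarith [Real.add_one_le_exp a]) n
    have h2 : Real.exp a ^ n = Real.exp u := by
      rw [hu_def, ← Real.exp_nat_mul]
    have h3 : Real.exp u ≤ 1 + u + (3/4) * u^2 := by
      have hb := Real.exp_bound (x := u) (by rw [abs_of_nonneg hu0]; exact hu1) (n := 2) (by norm_num)
      have hsum : ∑ m ∈ Finset.range 2, u ^ m / (m.factorial : ℝ) = 1 + u := by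
        simp [Finset.sum_range_succ]
      rw [hsum, abs_of_nonneg hu0] at hb
      have : |Real.exp u - (1 + u)| ≤ u^2 * (3/4) := by
        convert hb using 2
        norm_num [Nat.factorial]
      have h4 := abs_le.1 this
      nlinarith [h4.2]
    have key3 : (3/4) * u * (1 - s) ≤ s - s^2/4 := by
      have p1 : (3/4)*(1-s)*s ≤ (s - s^2/4)*(1-s^2/4) := by nlinarith
      nlinarith [mul_le_mul_of_nonneg_left hu_d (by linarith : (0:ℝ) ≤ (3/4)*(1-s))]
    have final : u + (3/4) * u^2 ≤ ε := by
      have q1 := mul_le_mul_of_nonneg_left key3 hu0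
      nlinarith [hu_d, hεs]
    calc (1 + a) ^ n ≤ Real.exp u := by rw [← h2]; exact h1
      _ ≤ 1 + u + (3/4) * u^2 := h3
      _ ≤ 1 + ε := by linarith
  · -- lower bound
    have h1 : 1 + (n:ℝ) * (-a) ≤ (1 + (-a)) ^ n :=
      one_add_mul_le_pow (by linarith) n
    have h2 : (1:ℝ) - u ≤ (1 - a)^n := by
      rw [show (1:ℝ) - a = 1 + (-a) by ring]
      nlinarith [h1]
    linarith

open scoped ENNReal

private lemma cga_tsum_pi_prod : ∀ {n : ℕ} (f : Fin n → ℤ → ℝ≥0∞),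
    ∑' k : Fin n → ℤ, ∏ i, f i (k i) = ∏ i, ∑' m : ℤ, f i m := by
  intro n
  induction n with
  | zero =>
    intro f
    rw [tsum_eq_single (fun i => (0:ℤ)) (fun b hb => absurd (funext fun i => i.elim0) hb)]
    simp
  | succ n ih =>
    intro f
    rw [← (Fin.consEquiv (fun _ => ℤ)).tsum_eq]
    have h1 : ∀ p : ℤ × (Fin n → ℤ),
        ∏ i, f i (Fin.consEquiv (fun _ => ℤ) p i)
          = f 0 p.1 * ∏ i : Fin n, f i.succ (p.2 i) := by
      intro p
      rw [Fin.prod_univ_succ]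
      simp [Fin.consEquiv]
    calc ∑' p : ℤ × (Fin n → ℤ), ∏ i, f i (Fin.consEquiv (fun _ => ℤ) p i)
        = ∑' p : ℤ × (Fin n → ℤ), f 0 p.1 * ∏ i : Fin n, f i.succ (p.2 i) :=
          tsum_congr h1
      _ = ∑' a : ℤ, ∑' b : Fin n → ℤ, f 0 a * ∏ i : Fin n, f i.succ (b i) :=
          ENNReal.tsum_prod'
      _ = (∑' a : ℤ, f 0 a) * ∑' b : Fin n → ℤ, ∏ i : Fin n, f i.succ (b i) := by
          simp_rw [ENNReal.tsum_mul_left]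
          rw [ENNReal.tsum_mul_right]
      _ = (∑' a : ℤ, f 0 a) * ∏ i : Fin n, ∑' m : ℤ, f i.succ m := by
          rw [ih]
      _ = ∏ i, ∑' m : ℤ, f i m := by
          rw [Fin.prod_univ_succ]

end CGAAux

set_option maxHeartbeats 2000000

/-- Let `n` be a positive integer, `ε ∈ (0, 1/3)`, and
`σ ≥ √(ln(2n(1 + 1/ε))/π)`. Let `γ` be the probability measure on `ℝⁿ` with Lebesgue density
`ρ_σ(x) = σ⁻ⁿ exp(−π‖x‖²/σ²)`, and let `μ` be the pushforward of `γ` under the coordinatewise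
fractional-part map `mod₁ : ℝⁿ → [0,1)ⁿ`. Then for every Borel set `A ⊆ [0,1)ⁿ`,
`|μ(A) − λ(A)| ≤ ε`, where `λ` denotes Lebesgue measure; that is, the total variation distance
between the collapsed Gaussian distribution and the uniform distribution on `[0,1)ⁿ` is at
most `ε`. -/
theorem collapsed_gaussian_close_to_uniform (n : ℕ) (hn : 0 < n) (ε : ℝ)
    (hε : ε ∈ Set.Ioo (0:ℝ) (1/3)) (σ : ℝ)
    (hσ : σ ≥ Real.sqrt (Real.log (2 * n * (1 + 1 / ε)) / Real.pi)) :
    let ρ : (Fin n → ℝ) → ℝ :=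
      fun x => (σ ^ n)⁻¹ * Real.exp (-Real.pi * (∑ i, (x i) ^ 2) / σ ^ 2)
    let γ : Measure (Fin n → ℝ) := volume.withDensity fun x => ENNReal.ofReal (ρ x)
    let mod1 : (Fin n → ℝ) → (Fin n → ℝ) := fun x i => Int.fract (x i)
    let μ : Measure (Fin n → ℝ) := γ.map mod1
    ∀ A : Set (Fin n → ℝ), MeasurableSet A →
      A ⊆ (Set.univ.pi fun _ => Set.Ico (0:ℝ) 1) →
      |(μ A).toReal - (volume A).toReal| ≤ ε := by
  intro ρ γ mod1 μ A hA hAsub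
  classical
  have hπ := Real.pi_pos
  have hε0 : 0 < ε := hε.1
  have hε3 : ε < 1/3 := hε.2
  have hn1 : (1:ℝ) ≤ (n:ℝ) := by exact_mod_cast hn
  have h1ε : 3 < 1/ε := by rw [lt_div_iff₀ hε0]; linarith
  have hM1 : (1:ℝ) < 2 * n * (1 + 1/ε) := by nlinarith
  have hM0 : (0:ℝ) < 2 * n * (1 + 1/ε) := by linarith
  have hlog0 : 0 < Real.log (2*n*(1+1/ε)) := Real.log_pos hM1
  have hσ0 : 0 < σ :=
    lt_of_lt_of_le (Real.sqrt_pos.2 (div_pos hlog0 hπ)) hσ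
  have hσsq : Real.log (2*n*(1+1/ε)) ≤ Real.pi * σ^2 := by
    have h1 : Real.sqrt (Real.log (2*n*(1+1/ε)) / Real.pi) ^ 2 ≤ σ ^ 2 :=
      pow_le_pow_left₀ (Real.sqrt_nonneg _) hσ 2
    rw [Real.sq_sqrt (by positivity)] at h1
    rw [div_le_iff₀ hπ] at h1
    linarith
  -- the Fourier decay parameter
  set t : ℝ := Real.exp (-Real.pi * σ^2) with ht_def
  have ht0 : 0 < t := Real.exp_pos _
  have ht_le : t ≤ ε / (2*n*(1+ε)) := by
    have h2 : t ≤ Real.exp (-(Real.log (2*n*(1+1/ε)))) := by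
      apply Real.exp_le_exp.2; linarith
    rw [Real.exp_neg, Real.exp_log hM0] at h2
    have hb : (0:ℝ) < 2*n*(1+ε) := by nlinarith
    have h3 : (2*(n:ℝ)*(1+1/ε))⁻¹ = ε/(2*n*(1+ε)) := by
      rw [inv_eq_one_div, div_eq_div_iff hM0.ne' hb.ne']
      field_simp
      ring
    rwa [h3] at h2
  obtain ⟨ha0, ha1, hup, hlo⟩ := cga_numeric hn hε0 hε3 ht0 ht_le
  set a : ℝ := 2 * (t / (1 - t^2)) with ha_def
  have h1a0 : (0:ℝ) ≤ 1 - a := by linarith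
  -- the one-dimensional folded density and its bounds
  set F1 : ℝ → ℝ := fun z => σ⁻¹ * (∑' k : ℤ, Real.exp (-Real.pi * (z + k)^2 / σ^2))
    with hF1_def
  have hf1 : ∀ z : ℝ, 1 - a ≤ F1 z ∧ F1 z ≤ 1 + a := by
    intro z
    have h := cga_poisson hσ0 z
    rw [← ht_def] at h
    have h2 := abs_le.1 h
    constructor
    · simp only [hF1_def]; linarith [h2.1]
    · simp only [hF1_def]; linarith [h2.2]
  -- measurability facts
  have hmod1 : Measurable mod1 :=
    measurable_pi_lambda _ fun i => measurable_fract.comp (measurable_pi_apply i)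
  have hρ_eq : ρ = fun x => (σ ^ n)⁻¹ * Real.exp (-Real.pi * (∑ i, (x i) ^ 2) / σ ^ 2) := rfl
  have hρmeas : Measurable ρ := by
    rw [hρ_eq]
    fun_prop
  have hμA : μ A = γ (mod1 ⁻¹' A) := Measure.map_apply hmod1 hA
  -- translates
  set trans : (Fin n → ℤ) → (Fin n → ℝ) := fun k i => (k i : ℝ) with htrans_def
  set B : (Fin n → ℤ) → Set (Fin n → ℝ) := fun k => (fun y => y + trans k) '' A with hB_def
  have hBpre : ∀ k, B k = (fun x => x - trans k) ⁻¹' A := by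
    intro k
    ext x
    simp only [hB_def, Set.mem_image, Set.mem_preimage]
    constructor
    · rintro ⟨y, hy, rfl⟩
      simpa using hy
    · intro hx
      exact ⟨x - trans k, hx, by abel⟩
  have hBmeas : ∀ k, MeasurableSet (B k) := by
    intro k
    rw [hBpre]
    exact hA.preimage (measurable_id.sub measurable_const)
  have hyIco : ∀ {y : Fin n → ℝ}, y ∈ A → ∀ i, y i ∈ Set.Ico (0:ℝ) 1 := by
    intro y hy i
    exact Set.mem_univ_pi.1 (hAsub hy) i
  have hcover : mod1 ⁻¹' A = ⋃ k : Fin n → ℤ, B k := by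
    ext x
    simp only [Set.mem_preimage, Set.mem_iUnion, hB_def, Set.mem_image]
    constructor
    · intro hx
      refine ⟨fun i => ⌊x i⌋, mod1 x, hx, ?_⟩
      funext i
      show Int.fract (x i) + ((⌊x i⌋ : ℤ) : ℝ) = x i
      exact Int.fract_add_floor (x i)
    · rintro ⟨k, y, hy, rfl⟩
      have : mod1 (y + trans k) = y := by
        funext i
        show Int.fract (y i + ((k i : ℤ) : ℝ)) = y i
        rw [Int.fract_add_intCast]
        exact Int.fract_eq_self.2 ⟨(hyIco hy i).1, (hyIco hy i).2⟩
      rw [this]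
      exact hy
  have hfloor : ∀ {y : Fin n → ℝ}, y ∈ A → ∀ (k : Fin n → ℤ) (i : Fin n),
      ⌊y i + ((k i : ℤ) : ℝ)⌋ = k i := by
    intro y hy k i
    rw [Int.floor_add_intCast, Int.floor_eq_zero_iff.2 (hyIco hy i), zero_add]
  have hdisj : Pairwise (Function.onFun Disjoint B) := by
    intro k k' hkk'
    rw [Function.onFun, Set.disjoint_left]
    rintro x ⟨y, hy, rfl⟩ ⟨y', hy', heq⟩
    apply hkk'
    funext i
    have h1 : ⌊(y + trans k) i⌋ = k i := hfloor hy k i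
    have h2 : ⌊(y' + trans k') i⌋ = k' i := hfloor hy' k' i
    have heq' : y' + trans k' = y + trans k := heq
    rw [heq'] at h2
    rw [← h1, ← h2]
  -- computing γ of each translate
  have hγB : ∀ k, γ (B k) = ∫⁻ y in A, ENNReal.ofReal (ρ (y + trans k)) ∂volume := by
    intro k
    have h1 : γ (B k) = ∫⁻ x in B k, ENNReal.ofReal (ρ x) ∂volume :=
      withDensity_apply _ (hBmeas k)
    have h2 := (measurePreserving_add_right volume (trans k)).setLIntegral_comp_emb
      (MeasurableEquiv.addRight (trans k)).measurableEmbedding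
      (fun x => ENNReal.ofReal (ρ x)) A
    rw [h1, hB_def]
    exact h2.symm
  -- the density as an integral
  have hμint : μ A = ∫⁻ y in A,
      (∑' k : Fin n → ℤ, ENNReal.ofReal (ρ (y + trans k))) ∂volume := by
    rw [hμA, hcover, measure_iUnion hdisj hBmeas]
    rw [tsum_congr hγB]
    rw [← lintegral_tsum]
    intro k
    exact ((hρmeas.comp (measurable_id.add_const (trans k))).ennreal_ofReal).aemeasurable
  -- pointwise product formula
  have hσ2 : (0:ℝ) < Real.pi / σ^2 := by positivity
  have hsummable : ∀ z : ℝ, Summable fun m : ℤ => Real.exp (-Real.pi * (z + m)^2 / σ^2) := by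
    intro z
    refine (cga_summable_shift hσ2 z).congr fun m => ?_
    congr 1
    ring
  have hG : ∀ y : Fin n → ℝ, (∑' k : Fin n → ℤ, ENNReal.ofReal (ρ (y + trans k)))
      = ∏ i, ENNReal.ofReal (F1 (y i)) := by
    intro y
    have hterm : ∀ k : Fin n → ℤ, ENNReal.ofReal (ρ (y + trans k))
        = ∏ i, ENNReal.ofReal (σ⁻¹ * Real.exp (-Real.pi * (y i + k i)^2 / σ^2)) := by
      intro k
      rw [← ENNReal.ofReal_prod_of_nonneg (fun i _ => by positivity)]
      congr 1
      rw [hρ_eq]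
      show (σ ^ n)⁻¹ * Real.exp (-Real.pi * (∑ i, ((y + trans k) i) ^ 2) / σ ^ 2) = _
      rw [Finset.prod_mul_distrib, Finset.prod_const, Finset.card_univ, Fintype.card_fin,
        ← inv_pow, ← Real.exp_sum]
      congr 2
      rw [← Finset.sum_div, ← Finset.mul_sum]
      rfl
    rw [tsum_congr hterm,
      cga_tsum_pi_prod (f := fun i m => ENNReal.ofReal (σ⁻¹ * Real.exp (-Real.pi * (y i + m)^2 / σ^2)))]
    refine Finset.prod_congr rfl fun i _ => ?_
    rw [← ENNReal.ofReal_tsum_of_nonneg (fun m => by positivity)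
      ((hsummable (y i)).mul_left σ⁻¹)]
    congr 1
    simp only [hF1_def]
    rw [tsum_mul_left]
  -- upper and lower bounds on μ A
  have hGub : ∀ y : Fin n → ℝ, (∑' k : Fin n → ℤ, ENNReal.ofReal (ρ (y + trans k)))
      ≤ ENNReal.ofReal ((1 + a)^n) := by
    intro y
    rw [hG y]
    calc ∏ i, ENNReal.ofReal (F1 (y i)) ≤ ∏ _i : Fin n, ENNReal.ofReal (1 + a) :=
          Finset.prod_le_prod' fun i _ => ENNReal.ofReal_le_ofReal (hf1 (y i)).2
      _ = ENNReal.ofReal ((1 + a)^n) := by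
          rw [Finset.prod_const, Finset.card_univ, Fintype.card_fin,
            ← ENNReal.ofReal_pow (by linarith)]
  have hGlb : ∀ y : Fin n → ℝ, ENNReal.ofReal ((1 - a)^n)
      ≤ (∑' k : Fin n → ℤ, ENNReal.ofReal (ρ (y + trans k))) := by
    intro y
    rw [hG y]
    calc ENNReal.ofReal ((1 - a)^n) = ∏ _i : Fin n, ENNReal.ofReal (1 - a) := by
          rw [Finset.prod_const, Finset.card_univ, Fintype.card_fin,
            ← ENNReal.ofReal_pow h1a0]
      _ ≤ ∏ i, ENNReal.ofReal (F1 (y i)) :=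
          Finset.prod_le_prod' fun i _ => ENNReal.ofReal_le_ofReal (hf1 (y i)).1
  have hub : μ A ≤ ENNReal.ofReal ((1 + a)^n) * volume A := by
    rw [hμint]
    calc ∫⁻ y in A, (∑' k : Fin n → ℤ, ENNReal.ofReal (ρ (y + trans k))) ∂volume
        ≤ ∫⁻ _y in A, ENNReal.ofReal ((1 + a)^n) ∂volume := lintegral_mono fun y => hGub y
      _ = ENNReal.ofReal ((1 + a)^n) * volume A := by
          rw [setLIntegral_const]
  have hlb : ENNReal.ofReal ((1 - a)^n) * volume A ≤ μ A := by
    rw [hμint]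
    calc ENNReal.ofReal ((1 - a)^n) * volume A
        = ∫⁻ _y in A, ENNReal.ofReal ((1 - a)^n) ∂volume := by rw [setLIntegral_const]
      _ ≤ ∫⁻ y in A, (∑' k : Fin n → ℤ, ENNReal.ofReal (ρ (y + trans k))) ∂volume :=
          lintegral_mono fun y => hGlb y
  -- volume facts
  have hvol_le : volume A ≤ 1 := by
    refine (measure_mono hAsub).trans ?_
    rw [volume_pi_pi]
    simp [Real.volume_Ico]
  have hvolA_ne : volume A ≠ ⊤ := (hvol_le.trans_lt ENNReal.one_lt_top).ne
  have hμA_ne : μ A ≠ ⊤ := by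
    refine (hub.trans_lt ?_).ne
    exact ENNReal.mul_lt_top ENNReal.ofReal_lt_top (hvol_le.trans_lt ENNReal.one_lt_top)
  -- pass to real numbers
  have hV0 : 0 ≤ (volume A).toReal := ENNReal.toReal_nonneg
  have hV1 : (volume A).toReal ≤ 1 := by
    have := ENNReal.toReal_mono ENNReal.one_ne_top hvol_le
    simpa using this
  have hubR : (μ A).toReal ≤ (1 + a)^n * (volume A).toReal := by
    have h1 := ENNReal.toReal_mono
      (ENNReal.mul_ne_top ENNReal.ofReal_ne_top hvolA_ne) hub
    rwa [ENNReal.toReal_mul, ENNReal.toReal_ofReal (by positivity)] at h1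
  have hlbR : (1 - a)^n * (volume A).toReal ≤ (μ A).toReal := by
    have h1 := ENNReal.toReal_mono hμA_ne hlb
    rwa [ENNReal.toReal_mul, ENNReal.toReal_ofReal (by positivity)] at h1
  rw [abs_sub_le_iff]
  constructor
  · nlinarith [hubR, hup, hV0, hV1]
  · nlinarith [hlbR, hlo, hV0, hV1]
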